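/- If q : V_n → F_2 (n ≥ 2) has Walsh–Hadamard transform supported on exactly four points λ₁, λ₂, λ₃, λ₄, then the signs γᵢ defined by q̂(λᵢ) = (−1)^{γᵢ}·2^{n−1} satisfy (−1)^{γ₁}(−1)^{γ₂}(−1)^{γ₃}(−1)^{γ₄} = −1. -/

import Mathlib

open Finset

def ip {n : ℕ} (a b : Fin n → ZMod 2) : ZMod 2 := ∑ i, a i * b i

def wht {n : ℕ} (f : (Fin n → ZMod 2) → ZMod 2) (l : Fin n → ZMod 2) : ℤ :=
  ∑ x : Fin n → ZMod 2, (-1 : ℤ) ^ (f x + ip l x).val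

lemma neg_one_pow_add (a b : ZMod 2) :
    ((-1 : ℤ) ^ (a + b).val : ℤ) = (-1 : ℤ) ^ a.val * (-1 : ℤ) ^ b.val := by
  fin_cases a <;> fin_cases b <;> decide

lemma ip_add_left {n : ℕ} (a b x : Fin n → ZMod 2) :
    ip (a + b) x = ip a x + ip b x := by
  simp [ip, add_mul, Finset.sum_add_distrib]

lemma char_sum {n : ℕ} (x : Fin n → ZMod 2) (hx : x ≠ 0) :
    ∑ μ : Fin n → ZMod 2, (-1 : ℤ) ^ (ip μ x).val = 0 := by
  obtain ⟨j, hj⟩ : ∃ j, x j ≠ 0 := by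
    by_contra h; push_neg at h; exact hx (funext h)
  have hj1 : x j = 1 := by
    have : ∀ a : ZMod 2, a ≠ 0 → a = 1 := by decide
    exact this _ hj
  set δ : Fin n → ZMod 2 := Pi.single j 1 with hδ
  have hipδ : ip δ x = 1 := by
    simp [ip, hδ, Pi.single_apply]
    simp [Finset.sum_ite_eq', hj1]
  have key : ∀ μ : Fin n → ZMod 2,
      (-1 : ℤ) ^ (ip (μ + δ) x).val = -(-1 : ℤ) ^ (ip μ x).val := by
    intro μ
    rw [ip_add_left, hipδ, neg_one_pow_add]
    norm_num [ZMod.val_one]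
  have h1 : ∑ μ : Fin n → ZMod 2, (-1 : ℤ) ^ (ip μ x).val
      = ∑ μ : Fin n → ZMod 2, (-1 : ℤ) ^ (ip (μ + δ) x).val :=
    (Fintype.sum_equiv (Equiv.addRight δ) _ _ (fun μ => rfl)).symm
  simp only [key] at h1
  rw [Finset.sum_neg_distrib] at h1
  linarith

theorem Q_sign_product (n : ℕ) (hn : 2 ≤ n) (q : (Fin n → ZMod 2) → ZMod 2)
    (lam : Fin 4 → (Fin n → ZMod 2)) (hlam : Function.Injective lam)
    (hsupp : ∀ μ, wht q μ ≠ 0 ↔ μ ∈ Set.range lam)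
    (γ : Fin 4 → ZMod 2)
    (hγ : ∀ i, wht q (lam i) = (-1 : ℤ) ^ (γ i).val * 2 ^ (n - 1)) :
    ∏ i, (-1 : ℤ) ^ (γ i).val = -1 := by
  have total : ∑ μ : Fin n → ZMod 2, wht q μ = (-1 : ℤ) ^ (q 0).val * 2 ^ n := by
    unfold wht
    rw [Finset.sum_comm]
    have hsplit : ∀ x : Fin n → ZMod 2,
        ∑ μ : Fin n → ZMod 2, (-1 : ℤ) ^ (q x + ip μ x).val
          = (-1 : ℤ) ^ (q x).val * ∑ μ : Fin n → ZMod 2, (-1 : ℤ) ^ (ip μ x).val := by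
      intro x
      rw [Finset.mul_sum]
      exact Finset.sum_congr rfl fun μ _ => by rw [neg_one_pow_add]
    simp only [hsplit]
    rw [Finset.sum_eq_single (0 : Fin n → ZMod 2)]
    · have hip0 : ∀ μ : Fin n → ZMod 2, ip μ (0 : Fin n → ZMod 2) = 0 := by
        intro μ; simp [ip]
      simp only [hip0, ZMod.val_zero, pow_zero, Finset.sum_const, Finset.card_univ]
      simp [Fintype.card_pi]
    · intro x _ hx
      rw [char_sum x hx]; ring
    · intro h; exact absurd (Finset.mem_univ _) h
  have hss : ∑ μ : Fin n → ZMod 2, wht q μ = ∑ i : Fin 4, wht q (lam i) := by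
    have himg : ∑ x ∈ Finset.univ.image lam, wht q x = ∑ i : Fin 4, wht q (lam i) :=
      Finset.sum_image (fun i _ j _ h => hlam h)
    rw [← himg]
    symm
    apply Finset.sum_subset (Finset.subset_univ _)
    intro x _ hx
    by_contra h
    obtain ⟨i, rfl⟩ := (hsupp x).mp h
    exact hx (Finset.mem_image.mpr ⟨i, Finset.mem_univ _, rfl⟩)
  have hsum : (∑ i : Fin 4, (-1 : ℤ) ^ (γ i).val) * 2 ^ (n - 1)
      = (-1 : ℤ) ^ (q 0).val * 2 ^ n := by
    rw [Finset.sum_mul]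
    simp_rw [← hγ]
    rw [← hss, total]
  have hn1 : (2 : ℤ) ^ n = 2 * 2 ^ (n - 1) := by
    conv_lhs => rw [show n = (n - 1) + 1 by omega]
    ring
  have hP : (0 : ℤ) < 2 ^ (n - 1) := by positivity
  have hsum2 : (∑ i : Fin 4, (-1 : ℤ) ^ (γ i).val) = (-1 : ℤ) ^ (q 0).val * 2 := by
    apply mul_right_cancel₀ (ne_of_gt hP)
    rw [hsum, hn1]; ring
  have hpm : ∀ m : ℕ, (-1 : ℤ) ^ m = 1 ∨ (-1 : ℤ) ^ m = -1 := by
    intro m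
    rcases Nat.even_or_odd m with h | h
    · exact Or.inl h.neg_one_pow
    · exact Or.inr h.neg_one_pow
  rw [Fin.sum_univ_four] at hsum2
  rw [Fin.prod_univ_four]
  rcases hpm (γ 0).val with h0|h0 <;> rcases hpm (γ 1).val with h1|h1 <;>
    rcases hpm (γ 2).val with h2|h2 <;> rcases hpm (γ 3).val with h3|h3 <;>
    rcases hpm (q 0).val with he|he <;>
    rw [h0, h1, h2, h3, he] at hsum2 <;> rw [h0, h1, h2, h3] <;> norm_num at hsum2 <;> norm_num
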